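/- Fix natural numbers λ_1, …, λ_n, set d = λ_1 + ⋯ + λ_n, and let V be the k-linear span in Oⁿ of the vectors X^j·e_i for 1 ≤ i ≤ n and 0 ≤ j < λ_i. The map sending a tuple (v_1, …, v_n) ∈ Vⁿ to the O-submodule of Oⁿ generated by the vectors X^{λ_i}·e_i + v_i (1 ≤ i ≤ n) is a bijection from Vⁿ onto the set of O-submodules R of Oⁿ with dim_k(Oⁿ/R) = d and R ∩ V = 0. Moreover, for each such submodule R one has Oⁿ = R ⊕ V as k-vector spaces. -/

import Mathlib

/-- The lattice generated by the vectors `X^{λ_i}·e_i + v_i`. -/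
noncomputable def latticeOf {k : Type*} [Field k] {n : ℕ} (lam : Fin n → ℕ)
    (V : Submodule k (Fin n → Polynomial k)) (v : Fin n → V) :
    Submodule (Polynomial k) (Fin n → Polynomial k) :=
  Submodule.span (Polynomial k)
    (Set.range fun i : Fin n =>
      Pi.single i (Polynomial.X ^ lam i) + (v i : Fin n → Polynomial k))

open Polynomial Submodule

/-- A submodule `pi univ p` is linearly equivalent to the product of the `p i`. -/
def piSubEquiv {R : Type*} [Semiring R] {ι : Type*} {M : ι → Type*}
    [∀ i, AddCommMonoid (M i)] [∀ i, Module R (M i)] (p : ∀ i, Submodule R (M i)) :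
    (Submodule.pi Set.univ p : Submodule R (∀ i, M i)) ≃ₗ[R] ∀ i, p i where
  toFun x := fun i => ⟨x.1 i, x.2 i (Set.mem_univ i)⟩
  map_add' x y := rfl
  map_smul' c x := rfl
  invFun x := ⟨fun i => (x i : M i), fun i _ => (x i).2⟩
  left_inv x := rfl
  right_inv x := rfl

section Aux

variable {k : Type*} [Field k] {n : ℕ} (lam : Fin n → ℕ)
  (V : Submodule k (Fin n → Polynomial k))
  (hV : V = Submodule.span k
      {w : Fin n → Polynomial k |
        ∃ (i : Fin n) (j : ℕ), j < lam i ∧ w = Pi.single i (Polynomial.X ^ j)})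

include hV

/-- `V` is the set of tuples whose `i`-th component has degree `< lam i`. -/
theorem V_eq_pi : V = Submodule.pi Set.univ fun i => degreeLT k (lam i) := by
  classical
  apply le_antisymm
  · rw [hV, Submodule.span_le]
    rintro w ⟨i, j, hj, rfl⟩
    intro i' _
    by_cases h : i' = i
    · subst h
      rw [Pi.single_eq_same]
      exact mem_degreeLT.2 ((degree_X_pow_le j).trans_lt (by exact_mod_cast hj))
    · rw [Pi.single_eq_of_ne h]
      exact (degreeLT k (lam i')).zero_mem
  · intro f hf
    rw [← Finset.univ_sum_single f]
    refine sum_mem fun i _ => ?_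
    have h1 : f i ∈ degreeLT k (lam i) := hf i (Set.mem_univ i)
    have h2 : (LinearMap.single k (fun _ : Fin n => Polynomial k) i) (f i) ∈
        Submodule.map (LinearMap.single k (fun _ : Fin n => Polynomial k) i)
          (degreeLT k (lam i)) := Submodule.mem_map_of_mem h1
    rw [degreeLT_eq_span_X_pow, Submodule.map_span] at h2
    rw [hV]
    refine Submodule.span_mono ?_ h2
    rintro _ ⟨_, hx, rfl⟩
    simp only [Finset.coe_image, Set.mem_image, Finset.mem_coe, Finset.mem_image,
      Finset.mem_range] at hx
    obtain ⟨j, hj, rfl⟩ := hx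
    exact ⟨i, j, hj, rfl⟩

theorem coeff_eq_zero_of_mem_V {f : Fin n → Polynomial k} (hf : f ∈ V) (i : Fin n) (m : ℕ)
    (hm : lam i ≤ m) : (f i).coeff m = 0 := by
  rw [V_eq_pi lam V hV] at hf
  have := mem_degreeLT.1 (hf i (Set.mem_univ i))
  exact coeff_eq_zero_of_degree_lt (this.trans_le (by exact_mod_cast hm))

/-- Core lemma A : the lattice meets `V` trivially. -/
theorem lattice_inf_V (v : Fin n → V) :
    (latticeOf lam V v).restrictScalars k ⊓ V = ⊥ := by
  classical
  rw [eq_bot_iff]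
  rintro x hx
  obtain ⟨hxL, hxV⟩ := Submodule.mem_inf.1 hx
  rw [Submodule.restrictScalars_mem] at hxL
  obtain ⟨c, hc⟩ := (mem_span_range_iff_exists_fun (Polynomial k)).1 hxL
  have hc0 : ∀ i, c i = 0 := by
    by_contra h
    push_neg at h
    obtain ⟨i0, hi0⟩ := h
    set F : Finset (Fin n) := Finset.univ.filter (fun i => c i ≠ 0) with hF
    have hFne : F.Nonempty := ⟨i0, by simp [hF, hi0]⟩
    obtain ⟨j, hjF, hmax⟩ := F.exists_max_image (fun i => (c i).natDegree) hFne
    have hcj : c j ≠ 0 := by simpa [hF] using hjF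
    set D := (c j).natDegree with hD
    have hdeg : ∀ i, (c i).natDegree ≤ D := by
      intro i
      by_cases h : c i = 0
      · simp [h]
      · exact hmax i (by simp [hF, h])
    -- compute x j
    have hxj : x j = ∑ i, c i * ((Pi.single i ((X : Polynomial k) ^ lam i)
        + (v i : Fin n → Polynomial k) : Fin n → Polynomial k) j) := by
      rw [← hc]
      simp [Finset.sum_apply, smul_eq_mul, mul_add]
    have hcoeff : (x j).coeff (lam j + D) = (c j).coeff D := by
      rw [hxj, finset_sum_coeff]
      have hterm : ∀ i, (c i * ((Pi.single i ((X : Polynomial k) ^ lam i)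
          + (v i : Fin n → Polynomial k) : Fin n → Polynomial k) j)).coeff (lam j + D)
          = (c i * ((Pi.single i ((X : Polynomial k) ^ lam i) : Fin n → Polynomial k) j)).coeff
            (lam j + D) := by
        intro i
        rw [Pi.add_apply, mul_add, coeff_add]
        have hz : (c i * ((v i : Fin n → Polynomial k) j)).coeff (lam j + D) = 0 := by
          rw [coeff_mul]
          refine Finset.sum_eq_zero ?_
          rintro ⟨a, b⟩ hab
          rw [Finset.HasAntidiagonal.mem_antidiagonal] at hab
          rcases le_or_gt a D with hab2 | hab2
          · have : lam j ≤ b := by omega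
            rw [coeff_eq_zero_of_mem_V lam V hV (v i).2 j b this, mul_zero]
          · rw [coeff_eq_zero_of_natDegree_lt ((hdeg i).trans_lt hab2), zero_mul]
        rw [hz, add_zero]
      rw [Finset.sum_congr rfl fun i _ => hterm i]
      rw [Finset.sum_eq_single j]
      · rw [Pi.single_eq_same, add_comm (lam j) D, coeff_mul_X_pow]
      · intro i _ hij
        rw [Pi.single_eq_of_ne hij.symm, mul_zero, coeff_zero]

      · intro h
        exact absurd (Finset.mem_univ j) h
    have h0 : (x j).coeff (lam j + D) = 0 :=
      coeff_eq_zero_of_mem_V lam V hV hxV j _ (Nat.le_add_right _ _)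
    rw [hcoeff] at h0
    exact (Polynomial.leadingCoeff_ne_zero.2 hcj) h0
  have : x = 0 := by
    rw [← hc]
    simp [hc0]
  simp [this]

/-- Core lemma B : the lattice and `V` together span everything. -/
theorem lattice_sup_V (v : Fin n → V) :
    (latticeOf lam V v).restrictScalars k ⊔ V = ⊤ := by
  classical
  set S := (latticeOf lam V v).restrictScalars k ⊔ V with hS
  have hVS : V ≤ S := le_sup_right
  have hLS : ∀ y ∈ latticeOf lam V v, y ∈ S := fun y hy =>
    le_sup_left (α := Submodule k (Fin n → Polynomial k)) (Submodule.restrictScalars_mem k _ y |>.2 hy)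
  have key : ∀ s : ℕ, ∀ i : Fin n, ∀ m : ℕ, m ≤ lam i + s →
      Pi.single i ((X : Polynomial k) ^ m) ∈ S := by
    intro s
    induction s using Nat.strong_induction_on with
    | _ s IH =>
      intro i m hm
      by_cases hmi : m < lam i
      · exact hVS (hV ▸ Submodule.subset_span ⟨i, m, hmi, rfl⟩)
      · push_neg at hmi
        set t := m - lam i with ht
        have hts : t ≤ s := by omega
        have hgen : ((X : Polynomial k) ^ t) •
            (Pi.single i ((X : Polynomial k) ^ lam i) + (v i : Fin n → Polynomial k))
            ∈ latticeOf lam V v :=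
          Submodule.smul_mem _ _ (Submodule.subset_span ⟨i, rfl⟩)
        have claim2 : ∀ w ∈ V, ((X : Polynomial k) ^ t) • w ∈ S := by
          intro w hw
          rw [hV] at hw
          induction hw using Submodule.span_induction with
          | mem y hy =>
            obtain ⟨i', j, hj, rfl⟩ := hy
            rw [← Pi.single_smul, smul_eq_mul, ← pow_add]
            by_cases h2 : t + j < lam i'
            · exact hVS (hV ▸ Submodule.subset_span ⟨i', t + j, h2, rfl⟩)
            · push_neg at h2
              exact IH (t + j - lam i') (by omega) i' (t + j) (by omega)
          | zero => rw [smul_zero]; exact S.zero_mem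
          | add y z _ _ hy hz => rw [smul_add]; exact S.add_mem hy hz
          | smul a y _ hy => rw [smul_comm]; exact S.smul_mem a hy
        have heq : Pi.single i ((X : Polynomial k) ^ m) =
            ((X : Polynomial k) ^ t) •
              (Pi.single i ((X : Polynomial k) ^ lam i) + (v i : Fin n → Polynomial k))
            - ((X : Polynomial k) ^ t) • (v i : Fin n → Polynomial k) := by
          rw [smul_add, ← Pi.single_smul, smul_eq_mul, ← pow_add]
          have : t + lam i = m := by omega
          rw [this, add_sub_cancel_right]
        rw [heq]
        exact S.sub_mem (hLS _ hgen) (claim2 _ (v i).2)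
  have hsingle : ∀ (i : Fin n) (p : Polynomial k), Pi.single i p ∈ S := by
    intro i p
    induction p using Polynomial.induction_on' with
    | add p q hp hq => rw [Pi.single_add]; exact S.add_mem hp hq
    | monomial m a =>
      have h1 : Pi.single i ((X : Polynomial k) ^ m) ∈ S :=
        key m i m (by omega)
      have h2 : (monomial m a : Polynomial k) = a • (X : Polynomial k) ^ m := by
        rw [← C_mul_X_pow_eq_monomial, ← smul_eq_C_mul]
      rw [h2, Pi.single_smul]
      exact S.smul_mem a h1
  rw [eq_top_iff]
  intro f _
  rw [← Finset.univ_sum_single f]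
  exact sum_mem fun i _ => hsingle i (f i)

omit hV in
theorem finrank_degreeLT (m : ℕ) : Module.finrank k (degreeLT k m) = m := by
  rw [(degreeLTEquiv k m).finrank_eq]
  simp

/-- `V` is finite dimensional. -/
theorem V_finite : Module.Finite k V := by
  haveI : ∀ i, Module.Finite k (degreeLT k (lam i)) := fun i =>
    Module.Finite.equiv (degreeLTEquiv k (lam i)).symm
  exact Module.Finite.equiv
    ((LinearEquiv.ofEq _ _ (V_eq_pi lam V hV)).trans
      (piSubEquiv fun i => degreeLT k (lam i))).symm

theorem V_finrank : Module.finrank k V = ∑ i, lam i := by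
  haveI : ∀ i, Module.Finite k (degreeLT k (lam i)) := fun i =>
    Module.Finite.equiv (degreeLTEquiv k (lam i)).symm
  rw [((LinearEquiv.ofEq _ _ (V_eq_pi lam V hV)).trans
      (piSubEquiv fun i => degreeLT k (lam i))).finrank_eq,
    Module.finrank_pi_fintype]
  exact Finset.sum_congr rfl fun i _ => finrank_degreeLT (k := k) (lam i)

end Aux

theorem stmt9 (k : Type*) [Field k] (n : ℕ) (lam : Fin n → ℕ) (d : ℕ)
    (hd : d = ∑ i : Fin n, lam i)
    (V : Submodule k (Fin n → Polynomial k))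
    (hV : V = Submodule.span k
      {w : Fin n → Polynomial k |
        ∃ (i : Fin n) (j : ℕ), j < lam i ∧ w = Pi.single i (Polynomial.X ^ j)}) :
    (∀ v : Fin n → V,
      Module.Finite k ((Fin n → Polynomial k) ⧸ latticeOf lam V v) ∧
      Module.finrank k ((Fin n → Polynomial k) ⧸ latticeOf lam V v) = d ∧
      (latticeOf lam V v).restrictScalars k ⊓ V = ⊥) ∧
    Function.Injective (fun v : Fin n → V => latticeOf lam V v) ∧
    (∀ R : Submodule (Polynomial k) (Fin n → Polynomial k),
      Module.Finite k ((Fin n → Polynomial k) ⧸ R) →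
      Module.finrank k ((Fin n → Polynomial k) ⧸ R) = d →
      R.restrictScalars k ⊓ V = ⊥ →
      (∃ v : Fin n → V, R = latticeOf lam V v) ∧
      R.restrictScalars k ⊔ V = ⊤) := by
  classical
  haveI hVfin : Module.Finite k V := V_finite lam V hV
  have hVrank : Module.finrank k V = d := by rw [V_finrank lam V hV, hd]
  have part1 : ∀ v : Fin n → V,
      Module.Finite k ((Fin n → Polynomial k) ⧸ latticeOf lam V v) ∧
      Module.finrank k ((Fin n → Polynomial k) ⧸ latticeOf lam V v) = d ∧
      (latticeOf lam V v).restrictScalars k ⊓ V = ⊥ := by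
    intro v
    have hinf := lattice_inf_V lam V hV v
    have hsup := lattice_sup_V lam V hV v
    have hcompl : IsCompl ((latticeOf lam V v).restrictScalars k) V :=
      ⟨disjoint_iff.2 hinf, codisjoint_iff.2 hsup⟩
    have eQ : ((Fin n → Polynomial k) ⧸ latticeOf lam V v) ≃ₗ[k] V :=
      (Submodule.Quotient.restrictScalarsEquiv k (latticeOf lam V v)).symm.trans
        (Submodule.quotientEquivOfIsCompl _ V hcompl)
    refine ⟨Module.Finite.equiv eQ.symm, ?_, hinf⟩
    rw [eQ.finrank_eq, hVrank]
  refine ⟨part1, ?_, ?_⟩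
  · intro v w h
    simp only at h
    funext i
    have h1 : Pi.single i ((Polynomial.X : Polynomial k) ^ lam i)
        + (v i : Fin n → Polynomial k) ∈ latticeOf lam V w := by
      rw [← h]; exact Submodule.subset_span ⟨i, rfl⟩
    have h2 : Pi.single i ((Polynomial.X : Polynomial k) ^ lam i)
        + (w i : Fin n → Polynomial k) ∈ latticeOf lam V w :=
      Submodule.subset_span ⟨i, rfl⟩
    have h3 : (v i : Fin n → Polynomial k) - (w i : Fin n → Polynomial k)
        ∈ (latticeOf lam V w).restrictScalars k ⊓ V := by
      refine Submodule.mem_inf.2 ⟨?_, Submodule.sub_mem V (v i).2 (w i).2⟩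
      rw [Submodule.restrictScalars_mem]
      have := Submodule.sub_mem _ h1 h2
      rwa [add_sub_add_left_eq_sub] at this
    rw [(part1 w).2.2, Submodule.mem_bot] at h3
    exact Subtype.ext (sub_eq_zero.1 h3)
  · intro R hRfin hRrank hRinf
    set P := R.restrictScalars k with hP
    haveI : Module.Finite k ((Fin n → Polynomial k) ⧸ P) :=
      Module.Finite.equiv (Submodule.Quotient.restrictScalarsEquiv k R).symm
    have hPrank : Module.finrank k ((Fin n → Polynomial k) ⧸ P) = d := by
      rw [(Submodule.Quotient.restrictScalarsEquiv k R).finrank_eq, hRrank]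
    -- the map V → M ⧸ P is injective, hence surjective
    have hRsup : P ⊔ V = ⊤ := by
      set φ : V →ₗ[k] ((Fin n → Polynomial k) ⧸ P) := P.mkQ.comp V.subtype with hφ
      have hinj : Function.Injective φ := by
        rw [← LinearMap.ker_eq_bot]
        rw [eq_bot_iff]
        intro x hx
        have : (x : Fin n → Polynomial k) ∈ P := by
          simpa [φ, Submodule.Quotient.mk_eq_zero] using hx
        have : (x : Fin n → Polynomial k) ∈ P ⊓ V := Submodule.mem_inf.2 ⟨this, x.2⟩
        rw [hRinf, Submodule.mem_bot] at this
        simpa [Submodule.mem_bot] using this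
      have hsurj : Function.Surjective φ :=
        (LinearMap.injective_iff_surjective_of_finrank_eq_finrank
          (by rw [hVrank, hPrank])).1 hinj
      rw [eq_top_iff]
      intro x _
      obtain ⟨w, hw⟩ := hsurj (P.mkQ x)
      have hxw : x - (w : Fin n → Polynomial k) ∈ P := by
        have hmk : (Submodule.Quotient.mk x : (Fin n → Polynomial k) ⧸ P)
            = Submodule.Quotient.mk (w : Fin n → Polynomial k) := by
          simpa [φ, Submodule.mkQ_apply] using hw.symm
        exact (Submodule.Quotient.eq P).1 hmk
      have hx' : x = (x - (w : Fin n → Polynomial k)) + (w : Fin n → Polynomial k) := by abel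
      rw [hx']
      exact Submodule.add_mem_sup hxw w.2
    -- construct v
    have hmem : ∀ i : Fin n, ∃ r ∈ P, ∃ u ∈ V,
        r + u = Pi.single i ((Polynomial.X : Polynomial k) ^ lam i) := by
      intro i
      have : Pi.single i ((Polynomial.X : Polynomial k) ^ lam i) ∈ P ⊔ V := by
        rw [hRsup]; trivial
      exact Submodule.mem_sup.1 this
    choose r hr u hu hru using hmem
    set v : Fin n → V := fun i => ⟨-(u i), V.neg_mem (hu i)⟩ with hv
    have hgenR : ∀ i : Fin n, Pi.single i ((Polynomial.X : Polynomial k) ^ lam i)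
        + (v i : Fin n → Polynomial k) ∈ R := by
      intro i
      have heq : Pi.single i ((Polynomial.X : Polynomial k) ^ lam i)
          + (v i : Fin n → Polynomial k) = r i := by
        show Pi.single i ((Polynomial.X : Polynomial k) ^ lam i) + (-(u i)) = r i
        rw [← hru i]
        abel
      rw [heq]
      exact hr i
    have hLR : latticeOf lam V v ≤ R := by
      rw [latticeOf, Submodule.span_le]
      rintro _ ⟨i, rfl⟩
      exact hgenR i
    have hsupL := lattice_sup_V lam V hV v
    have hRL : R ≤ latticeOf lam V v := by
      intro x hx
      have hxtop : x ∈ (latticeOf lam V v).restrictScalars k ⊔ V := by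
        rw [hsupL]; trivial
      obtain ⟨l, hl, uu, huu, hlu⟩ := Submodule.mem_sup.1 hxtop
      have hlL : l ∈ latticeOf lam V v := hl
      have hlR : l ∈ R := hLR hlL
      have huuR : uu ∈ R := by
        have h' : uu = x - l := by rw [← hlu]; abel
        rw [h']
        exact Submodule.sub_mem R hx hlR
      have huu0 : uu = 0 := by
        have : uu ∈ R.restrictScalars k ⊓ V := Submodule.mem_inf.2 ⟨huuR, huu⟩
        rwa [hRinf, Submodule.mem_bot] at this
      rw [← hlu, huu0, add_zero]
      exact hlL
    exact ⟨⟨v, le_antisymm hRL hLR⟩, hRsup⟩
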